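/- Let φ = (1+λ)^2 + (1−λ)^2|ξ|^2 and f(ξ,λ) = (4λξ + (1+|ξ|^2)(λ^2−1)∂_1)/φ for ξ in the closed unit disk of R^n and λ ≥ 1. Then |f(ξ,λ)| ≤ 1, with |f| = 1 exactly when |ξ| = 1, i.e. f maps D^n × [1,∞) into the closed unit ball with boundary points corresponding to |ξ| = 1. -/

import Mathlib

/-- Moebius coordinates: with `φ = (1+λ)² + (1−λ)²|ξ|²` and
`f(ξ,λ) = (4λξ + (1+|ξ|²)(λ²−1)∂₁)/φ` (so that
`|f|² = (16λ²|ξ|² + (1+|ξ|²)²(λ²−1)²)/φ²`, since `ξ ⊥ ∂₁`), for `ξ` in the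
closed unit disk and `λ ≥ 1` one has `|f| ≤ 1`, with `|f| = 1` iff
`|ξ| = 1`. -/
theorem moebius_maps_into_ball (n : ℕ) (ξ : EuclideanSpace ℝ (Fin n))
    (hξ : ‖ξ‖ ≤ 1) (lam : ℝ) (hlam : 1 ≤ lam)
    (φ normf2 : ℝ)
    (hφ : φ = (1 + lam) ^ 2 + (1 - lam) ^ 2 * ‖ξ‖ ^ 2)
    (hf : normf2 = (16 * lam ^ 2 * ‖ξ‖ ^ 2
      + (1 + ‖ξ‖ ^ 2) ^ 2 * (lam ^ 2 - 1) ^ 2) / φ ^ 2) :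
    normf2 ≤ 1 ∧ (normf2 = 1 ↔ ‖ξ‖ = 1) := by
  have hn : (0:ℝ) ≤ ‖ξ‖ := norm_nonneg ξ
  have hφpos : 0 < φ := by nlinarith [sq_nonneg ‖ξ‖, sq_nonneg ((1 - lam) * ‖ξ‖)]
  have ht : ‖ξ‖ ^ 2 ≤ 1 := by nlinarith
  have key : normf2 = 1 - 4 * lam * (1 - ‖ξ‖ ^ 2) / φ := by
    rw [hf]
    field_simp
    rw [hφ]; ring
  have hnonneg : 0 ≤ 4 * lam * (1 - ‖ξ‖ ^ 2) / φ := by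
    apply div_nonneg _ hφpos.le
    nlinarith
  constructor
  · rw [key]; linarith
  · rw [key]
    constructor
    · intro h
      have h0 : 4 * lam * (1 - ‖ξ‖ ^ 2) / φ = 0 := by linarith
      have h1 : 4 * lam * (1 - ‖ξ‖ ^ 2) = 0 := by
        field_simp at h0; rw [mul_zero] at h0; exact h0
      have h2 : ‖ξ‖ ^ 2 = 1 := by nlinarith
      nlinarith
    · intro h
      rw [h]; ring
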